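/- For every natural number k, every P ∈ R weighted homogeneous of weight k (for the weights 2, 4, 6 on X₂, X₄, X₆), and every integer n ≥ 1, one has ∂(Dⁿ(P)) = Dⁿ(∂(P)) + (n(k+n−1)/12)·D^{n−1}(P). -/

import Mathlib

open MvPolynomial

noncomputable section

namespace E2CommAux

abbrev R3 := MvPolynomial (Fin 3) ℂ

/-- The weight system 2, 4, 6 on the three variables. -/
def w : Fin 3 → ℕ := ![2, 4, 6]

/-- The weighted Euler derivation `E(Xᵢ) = wᵢ Xᵢ`. -/
def Eul : Derivation ℂ R3 R3 := mkDerivation ℂ (fun i => ((w i : ℂ)) • X i)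

@[simp] lemma Eul_X (i : Fin 3) : Eul (X i) = (w i : ℂ) • X i := mkDerivation_X _ _ _

lemma Eul_monomial (s : Fin 3 →₀ ℕ) (c : ℂ) :
    Eul (monomial s c) = ((Finsupp.weight w s : ℕ) : ℂ) • monomial s c := by
  rw [Eul, mkDerivation_monomial, Finsupp.sum]
  have h : ∀ i ∈ s.support,
      (monomial (s - Finsupp.single i 1)) ((s i : ℂ)) • ((w i : ℂ) • X i)
        = ((s i * w i : ℕ) : ℂ) • monomial s (1 : ℂ) := by
    intro i hi
    have hsi : s i ≠ 0 := Finsupp.mem_support_iff.mp hi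
    have h1 : monomial (s - Finsupp.single i 1) ((s i : ℂ)) * X i
        = monomial s ((s i : ℂ)) := by
      rw [X, monomial_mul, mul_one, tsub_add_cancel_of_le]
      rwa [Finsupp.single_le_iff, Nat.one_le_iff_ne_zero]
    rw [smul_eq_mul, mul_smul_comm, h1]
    rw [show (monomial s) ((s i : ℂ)) = (s i : ℂ) • monomial s (1 : ℂ) by
      rw [smul_monomial, smul_eq_mul, mul_one]]
    rw [smul_smul]
    push_cast
    ring_nf
  rw [Finset.sum_congr rfl h, ← Finset.sum_smul, ← Nat.cast_sum]
  have hw : (Finsupp.weight w s : ℕ) = ∑ i ∈ s.support, s i * w i := by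
    rw [Finsupp.weight_apply, Finsupp.sum]
    simp [smul_eq_mul]
  rw [hw, smul_comm]
  simp [smul_monomial]

/-- Euler's identity for weighted homogeneous polynomials. -/
lemma euler {P : R3} {k : ℕ} (hP : P.IsWeightedHomogeneous w k) :
    Eul P = (k : ℂ) • P := by
  conv_lhs => rw [← P.support_sum_monomial_coeff]
  rw [map_sum]
  conv_rhs => rw [← P.support_sum_monomial_coeff, Finset.smul_sum]
  refine Finset.sum_congr rfl fun d hd => ?_
  rw [Eul_monomial, hP (mem_support_iff.mp hd)]

end E2CommAux

open E2CommAux in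
/-- For the Ramanujan–Serre derivation `D` on `R = ℂ[X₂, X₄, X₆]` and the `E₂`-derivative
`∂ = ∂/∂X₂`, every weighted homogeneous `P` of weight `k` satisfies, for every `n ≥ 1`,
`∂(Dⁿ(P)) = Dⁿ(∂(P)) + (n(k+n−1)/12)·D^{n−1}(P)`. -/
theorem E2_derivative_iterate_commutator
    (D : Derivation ℂ (MvPolynomial (Fin 3) ℂ) (MvPolynomial (Fin 3) ℂ))
    (hD2 : D (X 0) = (1 / 12 : ℂ) • ((X 0) ^ 2 - X 1))
    (hD4 : D (X 1) = (1 / 3 : ℂ) • (X 0 * X 1 - X 2))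
    (hD6 : D (X 2) = (1 / 2 : ℂ) • (X 0 * X 2 - (X 1) ^ 2))
    (P : MvPolynomial (Fin 3) ℂ) (k : ℕ)
    (hP : P.IsWeightedHomogeneous ![2, 4, 6] k)
    (n : ℕ) (hn : 1 ≤ n) :
    pderiv 0 ((⇑D)^[n] P) =
      (⇑D)^[n] (pderiv 0 P) +
        ((n : ℂ) * ((k : ℂ) + (n : ℂ) - 1) / 12) • (⇑D)^[n - 1] P := by
  -- the commutator identity `⁅∂, D⁆ = (1/12) • Eul`
  have comm1 : ∀ Q : R3, pderiv 0 (D Q) = D (pderiv 0 Q) + (1/12 : ℂ) • Eul Q := by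
    have key : ⁅(pderiv 0 : Derivation ℂ R3 R3), D⁆ = (1/12 : ℂ) • Eul := by
      apply derivation_ext
      intro i
      fin_cases i <;>
        simp [Derivation.commutator_apply, hD2, hD4, hD6, Derivation.smul_apply,
          smul_sub, pow_two, Derivation.leibniz, pderiv_X_self,
          pderiv_X_of_ne (show (1:Fin 3) ≠ 0 by decide),
          pderiv_X_of_ne (show (2:Fin 3) ≠ 0 by decide), w,
          smul_smul, mul_smul_comm, smul_mul_assoc]
      · module
      · norm_num
      · norm_num
    intro Q
    have h := congrArg (fun L : Derivation ℂ R3 R3 => L Q) key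
    simp only [Derivation.commutator_apply, Derivation.smul_apply] at h
    linear_combination (norm := module) h
  -- the commutator identity `⁅Eul, D⁆ = 2 • D`
  have comm2 : ∀ Q : R3, Eul (D Q) = D (Eul Q) + (2 : ℂ) • D Q := by
    have key : ⁅Eul, D⁆ = (2 : ℂ) • D := by
      apply derivation_ext
      intro i
      fin_cases i <;>
        simp [Derivation.commutator_apply, hD2, hD4, hD6, Derivation.smul_apply,
          smul_sub, pow_two, Derivation.leibniz, w,
          smul_smul, mul_smul_comm, smul_mul_assoc]
      all_goals (ring_nf; first | rfl | module |
        (simp [smul_eq_C_mul, nsmul_eq_mul, map_ofNat]; ring))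
    intro Q
    have h := congrArg (fun L : Derivation ℂ R3 R3 => L Q) key
    simp only [Derivation.commutator_apply, Derivation.smul_apply] at h
    linear_combination (norm := module) h
  have hPw : P.IsWeightedHomogeneous w k := hP
  -- Euler identity for iterates of D
  have eulIter : ∀ m : ℕ, Eul ((⇑D)^[m] P) = ((k : ℂ) + 2 * m) • (⇑D)^[m] P := by
    intro m
    induction m with
    | zero => simpa using euler hPw
    | succ m ih =>
        rw [Function.iterate_succ_apply', comm2, ih, Derivation.map_smul]
        push_cast
        module
  -- main induction on n
  induction n with
  | zero => omega
  | succ n ih =>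
      rcases Nat.eq_or_lt_of_le hn with h1 | h1
      · -- base case n + 1 = 1
        have hn0 : n = 0 := by omega
        subst hn0
        simp only [zero_add, Function.iterate_one, Function.iterate_zero, id_eq,
          Nat.sub_self, Nat.cast_one, Nat.cast_zero]
        rw [comm1 P, euler hPw]
        module
      · have hn1 : 1 ≤ n := by omega
        have IH := ih hn1
        have hstep2 : (⇑D)^[n] P = D ((⇑D)^[n - 1] P) := by
          conv_lhs => rw [show n = (n - 1) + 1 by omega]
          exact Function.iterate_succ_apply' _ _ _
        rw [Function.iterate_succ_apply' (⇑D) n P, comm1, IH, map_add,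
          Derivation.map_smul, eulIter n,
          Function.iterate_succ_apply' (⇑D) n (pderiv 0 P), Nat.add_sub_cancel, ← hstep2]
        push_cast
        module

end
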